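/- If a topological space X has a countable cover by open subspaces each of which is quasi-Polish, then X is quasi-Polish. -/

import Mathlib

open TopologicalSpace Set Topology

/-- A Π⁰₂ set: a countable intersection of sets of the form (complement of open) ∪ open. -/
def IsPi02 {X : Type*} [TopologicalSpace X] (s : Set X) : Prop :=
  ∃ U V : ℕ → Set X, (∀ n, IsOpen (U n)) ∧ (∀ n, IsOpen (V n)) ∧
    s = ⋂ n, ((U n)ᶜ ∪ V n)

/-- A quasi-Polish space: homeomorphic to a Π⁰₂ subspace of 𝕊^ℕ,
where 𝕊 is the Sierpiński space (`Prop` with its topology in Mathlib). -/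
def QuasiPolish (X : Type*) [TopologicalSpace X] : Prop :=
  ∃ s : Set (ℕ → Prop), IsPi02 s ∧ Nonempty (X ≃ₜ s)

lemma isPi02_basic {X : Type*} [TopologicalSpace X] {A B : Set X}
    (hA : IsOpen A) (hB : IsOpen B) : IsPi02 (Aᶜ ∪ B) :=
  ⟨fun _ => A, fun _ => B, fun _ => hA, fun _ => hB, (Set.iInter_const _).symm⟩

lemma isPi02_open {X : Type*} [TopologicalSpace X] {A : Set X} (hA : IsOpen A) :
    IsPi02 A := by
  have : A = (Set.univ : Set X)ᶜ ∪ A := by simp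
  rw [this]; exact isPi02_basic isOpen_univ hA

lemma isPi02_iInter {X : Type*} [TopologicalSpace X] {s : ℕ → Set X}
    (h : ∀ n, IsPi02 (s n)) : IsPi02 (⋂ n, s n) := by
  choose U V hU hV hs using h
  refine ⟨fun k => U k.unpair.1 k.unpair.2, fun k => V k.unpair.1 k.unpair.2,
    fun k => hU _ _, fun k => hV _ _, ?_⟩
  ext x
  constructor
  · intro hx
    refine Set.mem_iInter.mpr fun k => ?_
    have h1 := Set.mem_iInter.mp hx k.unpair.1
    rw [hs k.unpair.1] at h1
    exact Set.mem_iInter.mp h1 k.unpair.2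
  · intro hx
    refine Set.mem_iInter.mpr fun n => ?_
    rw [hs n]
    refine Set.mem_iInter.mpr fun m => ?_
    have := Set.mem_iInter.mp hx (Nat.pair n m)
    simpa [Nat.unpair_pair] using this

lemma isPi02_inter {X : Type*} [TopologicalSpace X] {s t : Set X}
    (hs : IsPi02 s) (ht : IsPi02 t) : IsPi02 (s ∩ t) := by
  have heq : s ∩ t = ⋂ n : ℕ, (if n = 0 then s else t) := by
    ext x
    simp only [Set.mem_iInter, Set.mem_inter_iff]
    constructor
    · rintro ⟨h1, h2⟩ n; split <;> assumption
    · intro h; exact ⟨by simpa using h 0, by simpa using h 1⟩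
  rw [heq]
  exact isPi02_iInter fun n => by split <;> assumption

lemma isPi02_image {X Y : Type*} [TopologicalSpace X] [TopologicalSpace Y]
    (e : X ≃ₜ Y) {s : Set X} (hs : IsPi02 s) : IsPi02 (e '' s) := by
  obtain ⟨U, V, hU, hV, rfl⟩ := hs
  refine ⟨fun n => e '' U n, fun n => e '' V n,
    fun n => e.isOpenMap _ (hU n), fun n => e.isOpenMap _ (hV n), ?_⟩
  rw [Set.image_iInter e.bijective]
  exact Set.iInter_congr fun n => by
    rw [Set.image_union, Set.image_compl_eq e.bijective]

theorem quasiPolish_of_countable_open_cover {X : Type*} [TopologicalSpace X]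
    (U : ℕ → Set X) (hopen : ∀ n, IsOpen (U n)) (hcover : ⋃ n, U n = Set.univ)
    (hq : ∀ n, QuasiPolish (U n)) : QuasiPolish X := by
  classical
  choose s hs using hq
  have hPi : ∀ n, IsPi02 (s n) := fun n => (hs n).1
  have E : ∀ n, (U n) ≃ₜ (s n) := fun n => (hs n).2.some
  -- covering fact
  have hmem : ∀ x : X, ∃ n, x ∈ U n := fun x => by
    have : x ∈ ⋃ n, U n := by rw [hcover]; trivial
    exact Set.mem_iUnion.mp this
  -- the auxiliary open sets G m k
  set G : ℕ → ℕ → Set X :=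
    fun m k => {x | ∃ h : x ∈ U m, (E m ⟨x, h⟩ : ℕ → Prop) k} with hGdef
  have hGsub : ∀ m k, IsOpen {y : U m | (E m y : ℕ → Prop) k} := by
    intro m k
    have hc : Continuous fun y : U m => ((E m y : ℕ → Prop) k : Prop) :=
      ((continuous_apply k).comp (continuous_subtype_val.comp (E m).continuous))
    exact continuous_Prop.mp hc
  have hG : ∀ m k, IsOpen (G m k) := by
    intro m k
    have himg : G m k = Subtype.val '' {y : U m | (E m y : ℕ → Prop) k} := by
      ext x
      constructor
      · rintro ⟨h, hk⟩; exact ⟨⟨x, h⟩, hk, rfl⟩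
      · rintro ⟨⟨x', h'⟩, hk, rfl⟩; exact ⟨h', hk⟩
    rw [himg]
    exact (hopen m).isOpenMap_subtype_val _ (hGsub m k)
  -- the key transfer lemma: open sets of X, seen inside U n, come from opens of S
  have key : ∀ (n : ℕ) (A : Set X), IsOpen A →
      ∃ V : Set (ℕ → Prop), IsOpen V ∧ ∀ y : U n, (↑y ∈ A ↔ (E n y : ℕ → Prop) ∈ V) := by
    intro n A hA
    have h1 : IsOpen {y : U n | ↑y ∈ A} := hA.preimage continuous_subtype_val
    have h2 : IsOpen ((E n) '' {y : U n | ↑y ∈ A}) := (E n).isOpenMap _ h1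
    obtain ⟨V, hV, hVeq⟩ := isOpen_induced_iff.mp h2
    refine ⟨V, hV, fun y => ?_⟩
    constructor
    · intro hy
      have : E n y ∈ (E n) '' {y : U n | ↑y ∈ A} := ⟨y, hy, rfl⟩
      rw [← hVeq] at this
      exact this
    · intro hy
      have : E n y ∈ Subtype.val ⁻¹' V := hy
      rw [hVeq] at this
      obtain ⟨y', hy', hy'eq⟩ := this
      rwa [(E n).injective hy'eq] at hy'
  choose Ou hOu hOu' using fun n m => key n (U m) (hopen m)
  choose Og hOg hOg' using fun n m k => key n (G m k) (hG m k)
  choose A B hA hB hseq using hPi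
  -- the map f
  set I := (ℕ × ℕ) ⊕ ℕ with hIdef
  set f : X → (I → Prop) :=
    fun x => Sum.elim (fun nk => x ∈ G nk.1 nk.2) (fun n => x ∈ U n) with hfdef
  set R : (I → Prop) → ℕ → Prop := fun p n => p (Sum.inr n) with hRdef
  set Q : (I → Prop) → ℕ → (ℕ → Prop) := fun p n k => p (Sum.inl (n, k)) with hQdef
  have hfR : ∀ x n, R (f x) n ↔ x ∈ U n := fun _ _ => Iff.rfl
  have hfQ : ∀ x n k, Q (f x) n k ↔ x ∈ G n k := fun _ _ _ => Iff.rfl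
  have hQfx : ∀ (x : X) (n : ℕ) (h : x ∈ U n), Q (f x) n = (↑(E n ⟨x, h⟩) : ℕ → Prop) := by
    intro x n h
    funext k
    apply propext
    constructor
    · rintro ⟨h', hk⟩; exact hk
    · intro hk; exact ⟨h, hk⟩
  -- continuity
  have hfc : Continuous f := by
    apply continuous_pi
    rintro (⟨n, k⟩ | n)
    · exact continuous_Prop.mpr (hG n k)
    · exact continuous_Prop.mpr (hopen n)
  have hQcont : ∀ n, Continuous fun p : I → Prop => Q p n :=
    fun n => continuous_pi fun k => continuous_apply (Sum.inl (n, k))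
  have hRopen : ∀ n, IsOpen {p : I → Prop | R p n} :=
    fun n => continuous_Prop.mp (continuous_apply (Sum.inr n))
  have hQopen : ∀ (n : ℕ) (V : Set (ℕ → Prop)), IsOpen V → IsOpen {p : I → Prop | Q p n ∈ V} :=
    fun n V hV => hV.preimage (hQcont n)
  have hQkopen : ∀ n k, IsOpen {p : I → Prop | Q p n k} :=
    fun n k => continuous_Prop.mp (continuous_apply (Sum.inl (n, k)))
  -- injectivity
  have hinj : Function.Injective f := by
    intro x y hxy
    obtain ⟨n, hx⟩ := hmem x
    have hy : y ∈ U n := by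
      have hiff : (x ∈ U n) = (y ∈ U n) := congrFun hxy (Sum.inr n)
      exact hiff ▸ hx
    have hq : Q (f x) n = Q (f y) n := congrArg (fun p => Q p n) hxy
    rw [hQfx x n hx, hQfx y n hy] at hq
    have hE : E n ⟨x, hx⟩ = E n ⟨y, hy⟩ := Subtype.ext hq
    exact congrArg Subtype.val ((E n).injective hE)
  -- the Π⁰₂ description of the range
  set T : Set (I → Prop) :=
    {p | ∃ n, R p n}
    ∩ (⋂ n, ⋂ j, ({p : I → Prop | R p n ∧ Q p n ∈ A n j}ᶜ ∪ {p | Q p n ∈ B n j}))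
    ∩ (⋂ n, ⋂ k, ({p : I → Prop | Q p n k}ᶜ ∪ {p | R p n}))
    ∩ (⋂ n, ⋂ m, ({p : I → Prop | R p n ∧ R p m}ᶜ ∪ {p | Q p n ∈ Ou n m}))
    ∩ (⋂ n, ⋂ m, ({p : I → Prop | R p n ∧ Q p n ∈ Ou n m}ᶜ ∪ {p | R p m}))
    ∩ (⋂ n, ⋂ m, ⋂ k, ({p : I → Prop | R p n ∧ R p m ∧ Q p m k}ᶜ ∪ {p | Q p n ∈ Og n m k}))
    ∩ (⋂ n, ⋂ m, ⋂ k, ({p : I → Prop | R p n ∧ R p m ∧ Q p n ∈ Og n m k}ᶜ ∪ {p | Q p m k}))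
    with hTdef
  have hT : IsPi02 T := by
    refine isPi02_inter (isPi02_inter (isPi02_inter (isPi02_inter (isPi02_inter
      (isPi02_inter ?_ ?_) ?_) ?_) ?_) ?_) ?_
    · have : {p : I → Prop | ∃ n, R p n} = ⋃ n, {p : I → Prop | R p n} := Set.setOf_exists _
      rw [this]
      exact isPi02_open (isOpen_iUnion fun n => hRopen n)
    · exact isPi02_iInter fun n => isPi02_iInter fun j =>
        isPi02_basic ((hRopen n).inter (hQopen n _ (hA n j))) (hQopen n _ (hB n j))
    · exact isPi02_iInter fun n => isPi02_iInter fun k =>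
        isPi02_basic (hQkopen n k) (hRopen n)
    · exact isPi02_iInter fun n => isPi02_iInter fun m =>
        isPi02_basic ((hRopen n).inter (hRopen m)) (hQopen n _ (hOu n m))
    · exact isPi02_iInter fun n => isPi02_iInter fun m =>
        isPi02_basic ((hRopen n).inter (hQopen n _ (hOu n m))) (hRopen m)
    · exact isPi02_iInter fun n => isPi02_iInter fun m => isPi02_iInter fun k =>
        isPi02_basic ((hRopen n).inter ((hRopen m).inter (hQkopen m k))) (hQopen n _ (hOg n m k))
    · exact isPi02_iInter fun n => isPi02_iInter fun m => isPi02_iInter fun k =>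
        isPi02_basic ((hRopen n).inter ((hRopen m).inter (hQopen n _ (hOg n m k)))) (hQkopen m k)
  -- range f = T
  have hrange : Set.range f = T := by
    ext p
    constructor
    · rintro ⟨x, rfl⟩
      refine ⟨⟨⟨⟨⟨⟨?_, ?_⟩, ?_⟩, ?_⟩, ?_⟩, ?_⟩, ?_⟩
      · obtain ⟨n, hn⟩ := hmem x; exact ⟨n, hn⟩
      · refine Set.mem_iInter.mpr fun n => Set.mem_iInter.mpr fun j => ?_
        by_cases hn : x ∈ U n
        · have hsn : Q (f x) n ∈ s n := by
            rw [hQfx x n hn]; exact (E n ⟨x, hn⟩).2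
          rw [hseq n] at hsn
          have := Set.mem_iInter.mp hsn j
          rcases this with h | h
          · exact Or.inl fun hc => h hc.2
          · exact Or.inr h
        · exact Or.inl fun hc => hn hc.1
      · refine Set.mem_iInter.mpr fun n => Set.mem_iInter.mpr fun k => ?_
        by_cases hn : x ∈ U n
        · exact Or.inr hn
        · exact Or.inl fun hc => hn hc.1
      · refine Set.mem_iInter.mpr fun n => Set.mem_iInter.mpr fun m => ?_
        by_cases hnm : x ∈ U n ∧ x ∈ U m
        · refine Or.inr ?_
          have := (hOu' n m ⟨x, hnm.1⟩).mp hnm.2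
          show Q (f x) n ∈ Ou n m
          rw [hQfx x n hnm.1]
          exact this
        · exact Or.inl hnm
      · refine Set.mem_iInter.mpr fun n => Set.mem_iInter.mpr fun m => ?_
        by_cases hc : x ∈ U n ∧ Q (f x) n ∈ Ou n m
        · refine Or.inr ?_
          obtain ⟨hn, hO⟩ := hc
          rw [hQfx x n hn] at hO
          exact (hOu' n m ⟨x, hn⟩).mpr hO
        · exact Or.inl hc
      · refine Set.mem_iInter.mpr fun n => Set.mem_iInter.mpr fun m =>
          Set.mem_iInter.mpr fun k => ?_
        by_cases hc : x ∈ U n ∧ x ∈ U m ∧ Q (f x) m k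
        · refine Or.inr ?_
          obtain ⟨hn, hm, hk⟩ := hc
          have hxG : x ∈ G m k := hk
          have := (hOg' n m k ⟨x, hn⟩).mp hxG
          show Q (f x) n ∈ Og n m k
          rw [hQfx x n hn]
          exact this
        · exact Or.inl hc
      · refine Set.mem_iInter.mpr fun n => Set.mem_iInter.mpr fun m =>
          Set.mem_iInter.mpr fun k => ?_
        by_cases hc : x ∈ U n ∧ x ∈ U m ∧ Q (f x) n ∈ Og n m k
        · refine Or.inr ?_
          obtain ⟨hn, hm, hO⟩ := hc
          rw [hQfx x n hn] at hO
          exact (hOg' n m k ⟨x, hn⟩).mpr hO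
        · exact Or.inl hc
    · rintro ⟨⟨⟨⟨⟨⟨h1, h2⟩, h3⟩, h4⟩, h5⟩, h6⟩, h7⟩
      obtain ⟨n, hn⟩ := h1
      have hQs : Q p n ∈ s n := by
        rw [hseq n]
        refine Set.mem_iInter.mpr fun j => ?_
        have := Set.mem_iInter.mp (Set.mem_iInter.mp h2 n) j
        rcases this with h | h
        · exact Or.inl fun hc => h ⟨hn, hc⟩
        · exact Or.inr h
      set y : U n := (E n).symm ⟨Q p n, hQs⟩ with hydef
      set x : X := ↑y with hxdef
      have hEy : (↑(E n y) : ℕ → Prop) = Q p n :=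
        congrArg Subtype.val ((E n).apply_symm_apply ⟨Q p n, hQs⟩)
      have hUm : ∀ m, (x ∈ U m ↔ R p m) := by
        intro m
        constructor
        · intro hm
          have hO : Q p n ∈ Ou n m := by
            rw [← hEy]; exact (hOu' n m y).mp hm
          have := Set.mem_iInter.mp (Set.mem_iInter.mp h5 n) m
          rcases this with h | h
          · exact absurd ⟨hn, hO⟩ h
          · exact h
        · intro hm
          have := Set.mem_iInter.mp (Set.mem_iInter.mp h4 n) m
          rcases this with h | h
          · exact absurd ⟨hn, hm⟩ h
          · refine (hOu' n m y).mpr ?_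
            rwa [hEy]
      refine ⟨x, ?_⟩
      funext i
      rcases i with ⟨m, k⟩ | m
      · show (x ∈ G m k) = Q p m k
        apply propext
        constructor
        · rintro hxG
          obtain ⟨hm, hk⟩ := hxG
          have hOW : Q p n ∈ Og n m k := by
            rw [← hEy]; exact (hOg' n m k y).mp ⟨hm, hk⟩
          have := Set.mem_iInter.mp (Set.mem_iInter.mp (Set.mem_iInter.mp h7 n) m) k
          rcases this with h | h
          · exact absurd ⟨hn, (hUm m).mp hm, hOW⟩ h
          · exact h
        · intro hk
          have hm : R p m := by
            have := Set.mem_iInter.mp (Set.mem_iInter.mp h3 m) k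
            rcases this with h | h
            · exact absurd hk h
            · exact h
          have := Set.mem_iInter.mp (Set.mem_iInter.mp (Set.mem_iInter.mp h6 n) m) k
          rcases this with h | h
          · exact absurd ⟨hn, hm, hk⟩ h
          · have hOW : Q p n ∈ Og n m k := h
            have : x ∈ G m k := by
              refine (hOg' n m k y).mpr ?_
              rwa [hEy]
            exact this
      · show (x ∈ U m) = R p m
        exact propext (hUm m)
  -- f is an embedding
  have hemb : IsEmbedding f := by
    refine ⟨⟨le_antisymm (continuous_iff_le_induced.mp hfc) ?_⟩, hinj⟩
    intro W hW
    choose V hV hV' using fun n => key n W hW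
    have hWeq : W = f ⁻¹' (⋃ n, {p : I → Prop | R p n ∧ Q p n ∈ V n}) := by
      ext x
      simp only [Set.mem_preimage, Set.mem_iUnion, Set.mem_setOf_eq]
      constructor
      · intro hx
        obtain ⟨n, hn⟩ := hmem x
        refine ⟨n, hn, ?_⟩
        rw [hQfx x n hn]
        exact (hV' n ⟨x, hn⟩).mp hx
      · rintro ⟨n, hn, hQ⟩
        rw [hQfx x n hn] at hQ
        exact (hV' n ⟨x, hn⟩).mpr hQ
    rw [hWeq]
    exact isOpen_induced_iff.mpr
      ⟨⋃ n, {p : I → Prop | R p n ∧ Q p n ∈ V n},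
        isOpen_iUnion fun n => (hRopen n).inter (hQopen n _ (hV n)), rfl⟩
  -- transport to (ℕ → Prop)
  let φ : (I → Prop) ≃ₜ (ℕ → Prop) :=
    Homeomorph.piCongrLeft (Y := fun _ => Prop) (Denumerable.eqv I)
  refine ⟨φ '' Set.range f, ?_, ?_⟩
  · rw [hrange]; exact isPi02_image φ hT
  · exact ⟨(hemb.toHomeomorph).trans (φ.image (Set.range f))⟩
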